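/- In the graph G_{q,k} (q ≥ 1, k ≥ 1), each edge {p_i, s} (1 ≤ i ≤ q) satisfies ‖{p_i,s}‖_TVD = (q−1)/(q+2), and consequently Σ_{i=1}^{q} C_{G_{q,k}}({p_i,s}) ≤ 3q/(q+2); in particular, for q ≥ 2 this sum is at most (3/4)·q. (This is the corrected form of claim (ii), Λ₁ ≤ (3/4)√n, in the proof of the paper's Theorem 1.) -/

import Mathlib

/-- Earth Mover's Distance between two distributions `μ ν : V → ℝ` w.r.t. a
cost function `d : V → V → ℝ`: the minimum (infimum) of the total transport cost
over all feasible transport plans. -/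
noncomputable def EMD {V : Type} (d : V → V → ℝ) (μ ν : V → ℝ) : ℝ :=
  sInf { c : ℝ | ∃ z : V → V → ℝ,
    (∀ u v, 0 ≤ z u v) ∧ (∀ u, ∑ᶠ v, z u v = μ u) ∧ (∀ v, ∑ᶠ u, z u v = ν v) ∧
    c = ∑ᶠ u, ∑ᶠ v, d u v * z u v }

/-- The degree of a vertex: the number of its neighbours. -/
noncomputable def degC {V : Type} (G : SimpleGraph V) (u : V) : ℕ :=
  Nat.card {x | G.Adj u x}

open Classical in
/-- The uniform probability distribution on the closed neighbourhood of `u`. -/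
noncomputable def Pdist {V : Type} (G : SimpleGraph V) (u : V) : V → ℝ :=
  fun w => if w = u ∨ G.Adj u w then ((degC G u : ℝ) + 1)⁻¹ else 0

/-- The graph distance, as a real-valued cost function. -/
noncomputable def gdist {V : Type} (G : SimpleGraph V) : V → V → ℝ :=
  fun a b => (G.dist a b : ℝ)

/-- The total variation distance between the closed-neighbourhood distributions of `u`, `v`. -/
noncomputable def tvd {V : Type} (G : SimpleGraph V) (u v : V) : ℝ :=
  (1 / 2) * ∑ᶠ w, |Pdist G u w - Pdist G v w|

/-- The Ollivier–Ricci curvature of the (ordered) pair `u v`. -/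
noncomputable def ricci {V : Type} (G : SimpleGraph V) (u v : V) : ℝ :=
  1 - EMD (gdist G) (Pdist G u) (Pdist G v)


/-- Vertices of the complete 10-ary tree of depth `k`: lists over `Fin 10` of length
at most `k`, recording the (reversed) path from the root `[]`. -/
def TreeVert (k : ℕ) : Type := { l : List (Fin 10) // l.length ≤ k }

instance (k : ℕ) : DecidableEq (TreeVert k) :=
  inferInstanceAs (DecidableEq { l : List (Fin 10) // l.length ≤ k })

instance (k : ℕ) : Fintype (TreeVert k) :=
  Fintype.ofSurjective
    (fun x : Σ j : Fin (k + 1), List.Vector (Fin 10) j =>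
      (⟨x.2.1, by have h1 := x.2.2; have h2 := x.1.isLt; omega⟩ : TreeVert k))
    (fun y => ⟨⟨⟨y.1.length, Nat.lt_succ_of_le y.2⟩, ⟨y.1, rfl⟩⟩, Subtype.ext rfl⟩)

/-- The root of the tree. -/
def treeRoot (k : ℕ) : TreeVert k := ⟨[], by simp⟩

/-- The parent of a tree vertex (the root is mapped to itself). -/
def treeParent {k : ℕ} (x : TreeVert k) : TreeVert k :=
  ⟨x.1.tail, by have h1 := x.2; have h2 : x.1.tail.length = x.1.length - 1 := List.length_tail; omega⟩

/-- The vertex set of the graph `G_{q,k}`: the two special vertices `s`, `t`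
(encoded as `Fin 2`), the vertices `p_1, …, p_q`, and the tree vertices. -/
abbrev GVert (q k : ℕ) : Type := (Fin 2 ⊕ Fin q) ⊕ TreeVert k

def vS (q k : ℕ) : GVert q k := Sum.inl (Sum.inl 0)
def vT (q k : ℕ) : GVert q k := Sum.inl (Sum.inl 1)
def vP (q k : ℕ) (i : Fin q) : GVert q k := Sum.inl (Sum.inr i)
def vTr (q k : ℕ) (x : TreeVert k) : GVert q k := Sum.inr x

/-- Base adjacency relation generating the edges of `G_{q,k}`: the edge `{s,t}`,
the edges `{p_i, s}` and `{p_i, t}`, the bridge `{t, r_1}` to the root of the tree,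
and the parent-child tree edges. -/
def gadjBase (q k : ℕ) : GVert q k → GVert q k → Prop := fun x y =>
  (x = vS q k ∧ y = vT q k) ∨
  (∃ i : Fin q, x = vP q k i ∧ (y = vS q k ∨ y = vT q k)) ∨
  (x = vT q k ∧ y = vTr q k (treeRoot k)) ∨
  (∃ u v : TreeVert k, x = vTr q k u ∧ y = vTr q k v ∧ ∃ a : Fin 10, u.1 = a :: v.1)

/-- The graph `G_{q,k}` from the proof of the paper's Theorem 1
(with `q` playing the role of `√n`). -/
def Gqk (q k : ℕ) : SimpleGraph (GVert q k) := SimpleGraph.fromRel (gadjBase q k)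

/-- `N_k = (10^(k+1) - 1)/9`, the number of vertices of the complete 10-ary tree of depth `k`. -/
def Nk (k : ℕ) : ℕ := (10 ^ (k + 1) - 1) / 9
section Aux
variable (q k : ℕ)

lemma gqk_adj (x y : GVert q k) :
    (Gqk q k).Adj x y ↔ x ≠ y ∧ (gadjBase q k x y ∨ gadjBase q k y x) := by
  simp [Gqk, SimpleGraph.fromRel_adj]

lemma vS_ne_vT : vS q k ≠ vT q k := by simp [vS, vT, Fin.ext_iff]
lemma vP_ne_vS (i : Fin q) : vP q k i ≠ vS q k := by simp [vP, vS]
lemma vP_ne_vT (i : Fin q) : vP q k i ≠ vT q k := by simp [vP, vT]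

lemma adjP (i : Fin q) (y : GVert q k) :
    (Gqk q k).Adj (vP q k i) y ↔ (y = vS q k ∨ y = vT q k) := by
  rw [gqk_adj]
  constructor
  · rintro ⟨hne, h | h⟩ <;> simp [gadjBase, vP, vS, vT, vTr, Fin.ext_iff] at h <;> tauto
  · rintro (rfl | rfl)
    · exact ⟨vP_ne_vS q k i, Or.inl (Or.inr (Or.inl ⟨i, rfl, Or.inl rfl⟩))⟩
    · exact ⟨vP_ne_vT q k i, Or.inl (Or.inr (Or.inl ⟨i, rfl, Or.inr rfl⟩))⟩

lemma adjS (y : GVert q k) :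
    (Gqk q k).Adj (vS q k) y ↔ (y = vT q k ∨ ∃ i, y = vP q k i) := by
  rw [gqk_adj]
  constructor
  · rintro ⟨hne, h | h⟩ <;> simp [gadjBase, vP, vS, vT, vTr, Fin.ext_iff] at h <;>
      first
      | tauto
      | (obtain ⟨i, hi, -⟩ := h; right; exact ⟨i, by simp [vP, hi]⟩)
  · rintro (rfl | ⟨i, rfl⟩)
    · exact ⟨vS_ne_vT q k, Or.inl (Or.inl ⟨rfl, rfl⟩)⟩
    · exact ⟨(vP_ne_vS q k i).symm, Or.inr (Or.inr (Or.inl ⟨i, rfl, Or.inl rfl⟩))⟩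

end Aux
section Aux2
variable (q k : ℕ)

lemma vP_inj : Function.Injective (vP q k) := fun i j h => by simpa [vP] using h

lemma degP (i : Fin q) : degC (Gqk q k) (vP q k i) = 2 := by
  have hset : {x | (Gqk q k).Adj (vP q k i) x} = {vS q k, vT q k} := by
    ext y; simp [adjP, Set.mem_insert_iff]
  show ({x | (Gqk q k).Adj (vP q k i) x} : Set _).ncard = 2
  rw [hset]
  exact Set.ncard_pair (vS_ne_vT q k)

lemma degS : degC (Gqk q k) (vS q k) = q + 1 := by
  have hset : {x | (Gqk q k).Adj (vS q k) x} = insert (vT q k) (Set.range (vP q k)) := by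
    ext y; simp [adjS, Set.mem_insert_iff, Set.mem_range, eq_comm]
  show ({x | (Gqk q k).Adj (vS q k) x} : Set _).ncard = q + 1
  have hmem : vT q k ∉ Set.range (vP q k) := by
    rintro ⟨i, hi⟩; exact vP_ne_vT q k i hi
  have hr : (Set.range (vP q k)).ncard = q := by
    rw [Set.ncard_eq_toFinset_card', Set.toFinset_range,
      Finset.card_image_of_injective _ (vP_inj q k), Finset.card_univ, Fintype.card_fin]
  rw [hset, Set.ncard_insert_of_notMem hmem, hr]

lemma PdistP (i : Fin q) (w : GVert q k) :
    Pdist (Gqk q k) (vP q k i) w =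
      if w = vP q k i ∨ w = vS q k ∨ w = vT q k then (3 : ℝ)⁻¹ else 0 := by
  rw [Pdist, degP]
  norm_num [adjP]

lemma PdistS (w : GVert q k) :
    Pdist (Gqk q k) (vS q k) w =
      if w = vS q k ∨ w = vT q k ∨ ∃ j, w = vP q k j then ((q : ℝ) + 2)⁻¹ else 0 := by
  rw [Pdist, degS]
  have : ((q + 1 : ℕ) : ℝ) + 1 = (q : ℝ) + 2 := by push_cast; ring
  rw [this]
  congr 1
  simp [adjS]

end Aux2
section Aux3
variable (q k : ℕ)

lemma sum_gvert (f : GVert q k → ℝ) :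
    ∑ w, f w = f (vS q k) + f (vT q k) + (∑ j, f (vP q k j)) + ∑ x, f (vTr q k x) := by
  rw [Fintype.sum_sum_type, Fintype.sum_sum_type, Fin.sum_univ_two]
  rfl

lemma vTr_cases (x : TreeVert k) (i : Fin q) :
    vTr q k x ≠ vP q k i ∧ vTr q k x ≠ vS q k ∧ vTr q k x ≠ vT q k := by
  refine ⟨?_, ?_, ?_⟩ <;> simp [vTr, vP, vS, vT]

lemma sum_PdistP (i : Fin q) : ∑ w, Pdist (Gqk q k) (vP q k i) w = 1 := by
  rw [sum_gvert]
  simp only [PdistP]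
  rw [if_pos (by tauto), if_pos (by tauto)]
  have h1 : ∀ j : Fin q, (if vP q k j = vP q k i ∨ vP q k j = vS q k ∨ vP q k j = vT q k
      then (3:ℝ)⁻¹ else 0) = if j = i then (3:ℝ)⁻¹ else 0 := by
    intro j
    have := vP_ne_vS q k j; have := vP_ne_vT q k j
    have hinj : vP q k j = vP q k i ↔ j = i := ⟨fun h => vP_inj q k h, fun h => h ▸ rfl⟩
    simp [hinj, *]
  have h2 : ∀ x : TreeVert k, (if vTr q k x = vP q k i ∨ vTr q k x = vS q k ∨ vTr q k x = vT q k
      then (3:ℝ)⁻¹ else 0) = 0 := by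
    intro x; obtain ⟨a, b, c⟩ := vTr_cases q k x i; simp [a, b, c]
  simp only [h1, h2, Finset.sum_const_zero, Finset.sum_ite_eq' Finset.univ i]
  norm_num

lemma sum_PdistS : ∑ w, Pdist (Gqk q k) (vS q k) w = 1 := by
  have hq2 : ((q : ℝ) + 2) ≠ 0 := by positivity
  rw [sum_gvert]
  simp only [PdistS]
  rw [if_pos (by tauto), if_pos (by tauto)]
  have h1 : ∀ j : Fin q, (if vP q k j = vS q k ∨ vP q k j = vT q k ∨ ∃ j', vP q k j = vP q k j'
      then ((q:ℝ)+2)⁻¹ else 0) = ((q:ℝ)+2)⁻¹ := by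
    intro j; rw [if_pos (Or.inr (Or.inr ⟨j, rfl⟩))]
  have h2 : ∀ x : TreeVert k, (if vTr q k x = vS q k ∨ vTr q k x = vT q k ∨ ∃ j', vTr q k x = vP q k j'
      then ((q:ℝ)+2)⁻¹ else 0) = 0 := by
    intro x
    rw [if_neg]
    push_neg
    exact ⟨by simp [vTr, vS], by simp [vTr, vT], fun j => by simp [vTr, vP]⟩
  simp only [h1, h2, Finset.sum_const, Finset.sum_const_zero, Finset.card_univ,
    Fintype.card_fin, nsmul_eq_mul]
  field_simp
  ring

lemma tvd_val (hq : 1 ≤ q) (i : Fin q) :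
    tvd (Gqk q k) (vP q k i) (vS q k) = ((q : ℝ) - 1) / ((q : ℝ) + 2) := by
  have hq2 : ((q : ℝ) + 2) ≠ 0 := by positivity
  have hq1 : (1 : ℝ) ≤ (q : ℝ) := by exact_mod_cast hq
  have hBA : ((q:ℝ)+2)⁻¹ ≤ (3:ℝ)⁻¹ := by
    apply inv_anti₀ (by norm_num) (by linarith)
  rw [tvd, finsum_eq_sum_of_fintype, sum_gvert]
  have hfS : |Pdist (Gqk q k) (vP q k i) (vS q k) - Pdist (Gqk q k) (vS q k) (vS q k)|
      = (3:ℝ)⁻¹ - ((q:ℝ)+2)⁻¹ := by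
    rw [PdistP, PdistS, if_pos (by tauto), if_pos (by tauto), abs_of_nonneg (by linarith)]
  have hfT : |Pdist (Gqk q k) (vP q k i) (vT q k) - Pdist (Gqk q k) (vS q k) (vT q k)|
      = (3:ℝ)⁻¹ - ((q:ℝ)+2)⁻¹ := by
    rw [PdistP, PdistS, if_pos (by tauto), if_pos (by tauto), abs_of_nonneg (by linarith)]
  have hfP : ∀ j : Fin q,
      |Pdist (Gqk q k) (vP q k i) (vP q k j) - Pdist (Gqk q k) (vS q k) (vP q k j)|
      = if j = i then (3:ℝ)⁻¹ - ((q:ℝ)+2)⁻¹ else ((q:ℝ)+2)⁻¹ := by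
    intro j
    have hP2 : Pdist (Gqk q k) (vS q k) (vP q k j) = ((q:ℝ)+2)⁻¹ := by
      rw [PdistS, if_pos (Or.inr (Or.inr ⟨j, rfl⟩))]
    rw [PdistP, hP2]
    by_cases hji : j = i
    · subst hji
      rw [if_pos (Or.inl rfl), abs_of_nonneg (by linarith), if_pos rfl]
    · rw [if_neg ?cond, if_neg hji, zero_sub, abs_neg, abs_of_nonneg (by positivity)]
      case cond =>
        rintro (h | h | h)
        exacts [hji (vP_inj q k h), vP_ne_vS q k j h, vP_ne_vT q k j h]
  have hfTr : ∀ x : TreeVert k,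
      |Pdist (Gqk q k) (vP q k i) (vTr q k x) - Pdist (Gqk q k) (vS q k) (vTr q k x)| = 0 := by
    intro x
    obtain ⟨a, b, c⟩ := vTr_cases q k x i
    rw [PdistP, PdistS, if_neg (by tauto), if_neg ?cond2, sub_zero, abs_zero]
    case cond2 =>
      rintro (h | h | ⟨j, h⟩)
      exacts [b h, c h, (vTr_cases q k x j).1 h]
  have hsum : ∑ j : Fin q, (if j = i then (3:ℝ)⁻¹ - ((q:ℝ)+2)⁻¹ else ((q:ℝ)+2)⁻¹)
      = (q:ℝ) * ((q:ℝ)+2)⁻¹ + ((3:ℝ)⁻¹ - 2*((q:ℝ)+2)⁻¹) := by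
    have key : ∀ j : Fin q, (if j = i then (3:ℝ)⁻¹ - ((q:ℝ)+2)⁻¹ else ((q:ℝ)+2)⁻¹)
        = ((q:ℝ)+2)⁻¹ + (if j = i then (3:ℝ)⁻¹ - 2*((q:ℝ)+2)⁻¹ else 0) := fun j => by
      split <;> ring
    simp only [key, Finset.sum_add_distrib, Finset.sum_const, Finset.card_univ,
      Fintype.card_fin, nsmul_eq_mul, Finset.sum_ite_eq' Finset.univ i,
      Finset.mem_univ, if_true]
  rw [hfS, hfT]
  simp only [hfP, hfTr, Finset.sum_const_zero]
  rw [hsum]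
  field_simp
  ring

end Aux3
section EMDsec

lemma tvd_le_emd {V : Type} [Fintype V] (d : V → V → ℝ) (μ ν : V → ℝ)
    (hd0 : ∀ u v, 0 ≤ d u v) (hd1 : ∀ u v, u ≠ v → 1 ≤ d u v)
    (hμ0 : ∀ u, 0 ≤ μ u) (hν0 : ∀ v, 0 ≤ ν v)
    (hμ1 : ∑ u, μ u = 1) (hν1 : ∑ v, ν v = 1) :
    (1/2) * ∑ w, |μ w - ν w| ≤ EMD d μ ν := by
  classical
  unfold EMD
  apply le_csInf
  · refine ⟨_, fun u v => μ u * ν v, fun u v => mul_nonneg (hμ0 u) (hν0 v), ?_, ?_, rfl⟩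
    · intro u
      rw [finsum_eq_sum_of_fintype, ← Finset.mul_sum, hν1, mul_one]
    · intro v
      rw [finsum_eq_sum_of_fintype, ← Finset.sum_mul, hμ1, one_mul]
  · rintro c ⟨z, hz0, hzμ, hzν, rfl⟩
    simp only [finsum_eq_sum_of_fintype] at hzμ hzν ⊢
    have hdiag : ∀ u, z u u ≤ min (μ u) (ν u) := by
      intro u
      refine le_min ?_ ?_
      · rw [← hzμ u]
        exact Finset.single_le_sum (fun v _ => hz0 u v) (Finset.mem_univ u)
      · rw [← hzν u]
        exact Finset.single_le_sum (fun v _ => hz0 v u) (Finset.mem_univ u)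
    have hrow : ∀ u, μ u - min (μ u) (ν u) ≤ ∑ v, d u v * z u v := by
      intro u
      have e1 : μ u - z u u = ∑ v ∈ Finset.univ.erase u, z u v := by
        rw [← hzμ u, ← Finset.add_sum_erase _ _ (Finset.mem_univ u)]
        ring
      calc μ u - min (μ u) (ν u) ≤ μ u - z u u := by linarith [hdiag u]
        _ = ∑ v ∈ Finset.univ.erase u, z u v := e1
        _ ≤ ∑ v ∈ Finset.univ.erase u, d u v * z u v := by
            apply Finset.sum_le_sum
            intro v hv
            exact le_mul_of_one_le_left (hz0 u v) (hd1 u v (Finset.ne_of_mem_erase hv).symm)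
        _ ≤ ∑ v, d u v * z u v := by
            apply Finset.sum_le_sum_of_subset_of_nonneg (Finset.erase_subset _ _)
            intro v _ _
            exact mul_nonneg (hd0 u v) (hz0 u v)
    have habs : ∀ u, |μ u - ν u| = μ u + ν u - 2 * min (μ u) (ν u) := by
      intro u
      rcases le_total (μ u) (ν u) with h | h
      · rw [abs_of_nonpos (by linarith), min_eq_left h]; ring
      · rw [abs_of_nonneg (by linarith), min_eq_right h]; ring
    calc (1/2) * ∑ w, |μ w - ν w|
        = ∑ u, (μ u - min (μ u) (ν u)) := by
          simp only [habs]
          rw [Finset.sum_sub_distrib, Finset.sum_sub_distrib, Finset.sum_add_distrib,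
            ← Finset.mul_sum, hμ1, hν1]
          ring
      _ ≤ ∑ u, ∑ v, d u v * z u v := Finset.sum_le_sum (fun u _ => hrow u)

end EMDsec
section Conn
variable (q k : ℕ)

lemma reach_root : ∀ (l : List (Fin 10)) (h : l.length ≤ k),
    (Gqk q k).Reachable (vTr q k ⟨l, h⟩) (vTr q k (treeRoot k)) := by
  intro l
  induction l with
  | nil => intro h; exact SimpleGraph.Reachable.refl _
  | cons a l ih =>
    intro h
    have h' : l.length ≤ k := by simp at h; omega
    have hadj : (Gqk q k).Adj (vTr q k ⟨a :: l, h⟩) (vTr q k ⟨l, h'⟩) := by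
      rw [gqk_adj]
      constructor
      · simp only [vTr, ne_eq, Sum.inr.injEq, Subtype.mk.injEq]
        intro hc
        exact (List.cons_ne_self a l) (congrArg Subtype.val (Sum.inr_injective hc))
      · exact Or.inl (Or.inr (Or.inr (Or.inr ⟨⟨a :: l, h⟩, ⟨l, h'⟩, rfl, rfl, a, rfl⟩)))
    exact hadj.reachable.trans (ih h')

lemma adj_ts : (Gqk q k).Adj (vT q k) (vS q k) := by
  rw [gqk_adj]
  exact ⟨(vS_ne_vT q k).symm, Or.inr (Or.inl ⟨rfl, rfl⟩)⟩

lemma adj_t_root : (Gqk q k).Adj (vT q k) (vTr q k (treeRoot k)) := by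
  rw [gqk_adj]
  refine ⟨?_, Or.inl (Or.inr (Or.inr (Or.inl ⟨rfl, rfl⟩)))⟩
  simp [vT, vTr]

lemma gqk_conn : (Gqk q k).Connected := by
  rw [SimpleGraph.connected_iff]
  refine ⟨?_, ⟨vS q k⟩⟩
  have key : ∀ x : GVert q k, (Gqk q k).Reachable x (vS q k) := by
    intro x
    match x with
    | Sum.inl (Sum.inl a) =>
      fin_cases a
      · exact SimpleGraph.Reachable.refl _
      · exact (adj_ts q k).reachable
    | Sum.inl (Sum.inr i) =>
      have : (Gqk q k).Adj (vP q k i) (vS q k) := (adjP q k i _).mpr (Or.inl rfl)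
      exact this.reachable
    | Sum.inr x =>
      refine ((reach_root q k x.1 x.2).trans ?_)
      exact ((adj_t_root q k).symm.reachable).trans (adj_ts q k).reachable
  intro x y
  exact (key x).trans (key y).symm

lemma gdist_nonneg (x y : GVert q k) : 0 ≤ gdist (Gqk q k) x y := by
  simp [gdist]

lemma gdist_one_le (x y : GVert q k) (h : x ≠ y) : 1 ≤ gdist (Gqk q k) x y := by
  have := (gqk_conn q k).pos_dist_of_ne h
  rw [gdist]
  exact_mod_cast this

lemma Pdist_nonneg {V : Type} (G : SimpleGraph V) (u w : V) : 0 ≤ Pdist G u w := by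
  rw [Pdist]
  split
  · positivity
  · exact le_refl 0

end Conn
/-- In the graph `G_{q,k}` (`q ≥ 1`, `k ≥ 1`), each edge `{p_i, s}`
(`1 ≤ i ≤ q`) satisfies `‖{p_i,s}‖_TVD = (q−1)/(q+2)`, and consequently
`Σ_{i=1}^{q} C_{G_{q,k}}({p_i,s}) ≤ 3q/(q+2)`; in particular, for `q ≥ 2` this
sum is at most `(3/4)·q`. -/
theorem tvd_pis_edges (q k : ℕ) (hq : 1 ≤ q) (hk : 1 ≤ k) :
    (∀ i : Fin q, tvd (Gqk q k) (vP q k i) (vS q k) = ((q : ℝ) - 1) / ((q : ℝ) + 2)) ∧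
    (∑ i : Fin q, ricci (Gqk q k) (vP q k i) (vS q k)) ≤ 3 * (q : ℝ) / ((q : ℝ) + 2) ∧
    (2 ≤ q → (∑ i : Fin q, ricci (Gqk q k) (vP q k i) (vS q k)) ≤ (3 / 4) * (q : ℝ)) := by
  have hq2 : (0:ℝ) < (q : ℝ) + 2 := by positivity
  have hq1 : (1 : ℝ) ≤ (q : ℝ) := by exact_mod_cast hq
  have htvd := fun i => tvd_val q k hq i
  have hricci : ∀ i : Fin q, ricci (Gqk q k) (vP q k i) (vS q k) ≤ 3 / ((q:ℝ) + 2) := by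
    intro i
    have hle := tvd_le_emd (gdist (Gqk q k)) (Pdist (Gqk q k) (vP q k i)) (Pdist (Gqk q k) (vS q k))
      (gdist_nonneg q k) (gdist_one_le q k)
      (fun u => Pdist_nonneg _ _ u) (fun u => Pdist_nonneg _ _ u)
      (sum_PdistP q k i) (sum_PdistS q k)
    have htv : (1/2) * ∑ w, |Pdist (Gqk q k) (vP q k i) w - Pdist (Gqk q k) (vS q k) w|
        = ((q : ℝ) - 1) / ((q : ℝ) + 2) := by
      rw [← htvd i, tvd, finsum_eq_sum_of_fintype]
    rw [htv] at hle
    rw [ricci]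
    have : ((q : ℝ) - 1) / ((q : ℝ) + 2) = 1 - 3 / ((q:ℝ) + 2) := by
      field_simp
      ring
    linarith [this ▸ hle]
  have hsum : (∑ i : Fin q, ricci (Gqk q k) (vP q k i) (vS q k)) ≤ 3 * (q : ℝ) / ((q : ℝ) + 2) := by
    calc (∑ i : Fin q, ricci (Gqk q k) (vP q k i) (vS q k))
        ≤ ∑ _i : Fin q, 3 / ((q:ℝ) + 2) := Finset.sum_le_sum (fun i _ => hricci i)
      _ = (q : ℝ) * (3 / ((q:ℝ) + 2)) := by
          rw [Finset.sum_const, Finset.card_univ, Fintype.card_fin, nsmul_eq_mul]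
      _ = 3 * (q : ℝ) / ((q : ℝ) + 2) := by ring
  refine ⟨htvd, hsum, ?_⟩
  intro hq2'
  have hq2r : (2 : ℝ) ≤ (q : ℝ) := by exact_mod_cast hq2'
  have : 3 * (q : ℝ) / ((q : ℝ) + 2) ≤ (3/4) * (q : ℝ) := by
    rw [div_le_iff₀ hq2]
    nlinarith
  linarith
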